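/- arXiv:1606.07231 — 5 statements merged into one kernel-verified Lean document; each statement's English description precedes it below -/
import Mathlib

section
/- The ℓ_{2,1} mixed norm of a matrix X ∈ ℂ^{K×N} (the sum of the ℓ2 norms of its rows) equals the minimum of (1/2)(‖Γ‖_F² + ‖G‖_F²) over all diagonal matrices Γ ∈ ℂ^{K×K} and matrices G ∈ ℂ^{K×N} with X = Γ·G. -/
open scoped Matrix

/-- Squared Frobenius norm of a complex matrix. -/
noncomputable def frobSq {m n : Type*} [Fintype m] [Fintype n] (X : Matrix m n ℂ) : ℝ :=
  ∑ i, ∑ j, ‖X i j‖ ^ 2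

/-- The ℓ_{2,1} mixed norm of a matrix: sum of ℓ2 norms of its rows. -/
noncomputable def l21Norm {K N : ℕ} (X : Matrix (Fin K) (Fin N) ℂ) : ℝ :=
  ∑ k, Real.sqrt (∑ n, ‖X k n‖ ^ 2)

/-- ‖X‖_{2,1} equals the minimum of (1/2)(‖Γ‖_F² + ‖G‖_F²) over all
diagonal Γ ∈ ℂ^{K×K} and G ∈ ℂ^{K×N} with X = Γ·G. -/
theorem l21_eq_min_diag_factorization (K N : ℕ) (X : Matrix (Fin K) (Fin N) ℂ) :
    IsLeast { r : ℝ | ∃ (Γ : Matrix (Fin K) (Fin K) ℂ) (G : Matrix (Fin K) (Fin N) ℂ),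
      Γ.IsDiag ∧ X = Γ * G ∧ r = (1/2) * (frobSq Γ + frobSq G) } (l21Norm X) := by
  set r : Fin K → ℝ := fun k => ∑ n, ‖X k n‖ ^ 2 with hr
  have hrnn : ∀ k, 0 ≤ r k := fun k => Finset.sum_nonneg fun n _ => sq_nonneg _
  constructor
  · -- membership
    set d : Fin K → ℂ := fun k => (Real.sqrt (Real.sqrt (r k)) : ℝ) with hd
    refine ⟨Matrix.diagonal d, fun k n => X k n / d k, Matrix.isDiag_diagonal d, ?_, ?_⟩
    · ext k n
      change X k n = (Matrix.diagonal d * Matrix.of (fun k n => X k n / d k)) k n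
      rw [Matrix.mul_apply]
      rw [Finset.sum_eq_single k]
      · by_cases h : r k = 0
        · have hx : X k n = 0 := by
            have := (Finset.sum_eq_zero_iff_of_nonneg (fun n _ => sq_nonneg ‖X k n‖)).mp h
              n (Finset.mem_univ n)
            simpa [pow_eq_zero_iff] using this
          simp [hx]
        · have hdk : d k ≠ 0 := by
            simp only [hd, Ne, Complex.ofReal_eq_zero,
              Real.sqrt_eq_zero (Real.sqrt_nonneg _), Real.sqrt_eq_zero (hrnn k)]
            exact h
          rw [Matrix.diagonal_apply_eq, Matrix.of_apply, mul_div_assoc', mul_div_cancel_left₀ _ hdk]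
      · intro j _ hj
        simp [Matrix.diagonal_apply_ne' _ hj]
      · simp
    · have hΓ : frobSq (Matrix.diagonal d) = ∑ k, Real.sqrt (r k) := by
        unfold frobSq
        refine Finset.sum_congr rfl fun i _ => ?_
        rw [Finset.sum_eq_single i]
        · simp only [Matrix.diagonal_apply_eq, hd, Complex.norm_real, Real.norm_eq_abs,
            abs_of_nonneg (Real.sqrt_nonneg _)]
          rw [Real.sq_sqrt (Real.sqrt_nonneg _)]
        · intro j _ hj; simp [Matrix.diagonal_apply_ne' _ hj]
        · simp
      have hG : frobSq (fun k n => X k n / d k) = ∑ k, Real.sqrt (r k) := by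
        unfold frobSq
        refine Finset.sum_congr rfl fun k _ => ?_
        by_cases h : r k = 0
        · have hx : ∀ n, X k n = 0 := fun n => by
            have := (Finset.sum_eq_zero_iff_of_nonneg (fun n _ => sq_nonneg ‖X k n‖)).mp h
              n (Finset.mem_univ n)
            simpa [pow_eq_zero_iff] using this
          simp [hx, h]
        · have hsq : Real.sqrt (r k) ≠ 0 := by
            intro hh
            exact h (le_antisymm ((Real.sqrt_eq_zero (hrnn k)).mp hh).le (hrnn k))
          have hdk : ‖d k‖ = Real.sqrt (Real.sqrt (r k)) := by
            simp [hd, abs_of_nonneg (Real.sqrt_nonneg _)]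
          have : ∀ n, ‖X k n / d k‖ ^ 2 = ‖X k n‖ ^ 2 / Real.sqrt (r k) := by
            intro n
            rw [norm_div, div_pow, hdk, Real.sq_sqrt (Real.sqrt_nonneg _)]
          rw [Finset.sum_congr rfl fun n _ => this n, ← Finset.sum_div]
          show r k / Real.sqrt (r k) = Real.sqrt (r k)
          rw [div_eq_iff hsq]
          exact (Real.mul_self_sqrt (hrnn k)).symm
      rw [hΓ, hG, l21Norm]
      ring
  · -- lower bound
    rintro t ⟨Γ, G, hdiag, hXeq, rfl⟩
    have hentry : ∀ k n, X k n = Γ k k * G k n := by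
      intro k n
      rw [hXeq, Matrix.mul_apply, Finset.sum_eq_single k]
      · intro j _ hj; rw [hdiag hj.symm, zero_mul]
      · simp
    have hrow : ∀ k, Real.sqrt (r k) ≤ (1/2) * (‖Γ k k‖ ^ 2 + ∑ n, ‖G k n‖ ^ 2) := by
      intro k
      have h1 : r k = ‖Γ k k‖ ^ 2 * ∑ n, ‖G k n‖ ^ 2 := by
        rw [hr, Finset.mul_sum]
        exact Finset.sum_congr rfl fun n _ => by rw [hentry k n, norm_mul, mul_pow]
      rw [h1, Real.sqrt_mul (sq_nonneg _), Real.sqrt_sq (norm_nonneg _)]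
      set b := Real.sqrt (∑ n, ‖G k n‖ ^ 2) with hb
      have hb2 : b ^ 2 = ∑ n, ‖G k n‖ ^ 2 :=
        Real.sq_sqrt (Finset.sum_nonneg fun n _ => sq_nonneg _)
      rw [← hb2]
      nlinarith [sq_nonneg (‖Γ k k‖ - b), norm_nonneg (Γ k k), Real.sqrt_nonneg (∑ n, ‖G k n‖ ^ 2)]
    have hΓ : ∑ k, ‖Γ k k‖ ^ 2 ≤ frobSq Γ := by
      unfold frobSq
      refine Finset.sum_le_sum fun i _ => ?_
      exact Finset.single_le_sum (fun j _ => sq_nonneg ‖Γ i j‖) (Finset.mem_univ i)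
    calc l21Norm X = ∑ k, Real.sqrt (r k) := rfl
      _ ≤ ∑ k, (1/2) * (‖Γ k k‖ ^ 2 + ∑ n, ‖G k n‖ ^ 2) :=
          Finset.sum_le_sum fun k _ => hrow k
      _ = (1/2) * (∑ k, ‖Γ k k‖ ^ 2 + ∑ k, ∑ n, ‖G k n‖ ^ 2) := by
          rw [← Finset.sum_add_distrib, Finset.mul_sum]
      _ ≤ (1/2) * (frobSq Γ + frobSq G) := by
          have : frobSq G = ∑ k, ∑ n, ‖G k n‖ ^ 2 := rfl
          nlinarith [hΓ]
end

section
/- The SPARROW problem min over nonnegative diagonal S of Tr((A S Aᴴ + λ I_M)⁻¹ R̂) + Tr(S) has the same optimal value as the semidefinite program min over (S nonnegative diagonal, U_N Hermitian N×N) of (1/N)Tr(U_N) + Tr(S) subject to [[U_N, Yᴴ],[Y, A S Aᴴ + λ I_M]] ⪰ 0. -/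
open scoped Matrix ComplexOrder

/-- The SPARROW objective Tr((A S Aᴴ + λ I_M)⁻¹ R̂) + Tr(S), with S = diag(s). -/
noncomputable def sparrowObj {M K : ℕ} (A : Matrix (Fin M) (Fin K) ℂ) (lam : ℝ)
    (R : Matrix (Fin M) (Fin M) ℂ) (s : Fin K → ℝ) : ℝ :=
  (((A * Matrix.diagonal (fun k => (s k : ℂ)) * Aᴴ
      + (lam : ℂ) • (1 : Matrix (Fin M) (Fin M) ℂ))⁻¹ * R).trace).re + ∑ k, s k

lemma traceReNonneg {n : ℕ} {M : Matrix (Fin n) (Fin n) ℂ} (hM : M.PosSemidef) :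
    0 ≤ M.trace.re := by
  rw [Matrix.trace]
  have hsum : (∑ i, Matrix.diag M i).re = ∑ i, (Matrix.diag M i).re := Complex.re_sum _ _
  rw [hsum]
  refine Finset.sum_nonneg fun i _ => ?_
  have h := hM.dotProduct_mulVec_nonneg (Pi.single i 1)
  have : star (Pi.single i 1) ⬝ᵥ M *ᵥ Pi.single i 1 = M i i := by
    simp [Matrix.mulVec_single, dotProduct, Pi.single_apply, apply_ite]
  rw [this] at h
  simpa using (Complex.le_def.mp h).1

lemma QposDef {M K : ℕ} (A : Matrix (Fin M) (Fin K) ℂ) (lam : ℝ) (hlam : 0 < lam)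
    (s : Fin K → ℝ) (hs : ∀ k, 0 ≤ s k) :
    (A * Matrix.diagonal (fun k => (s k : ℂ)) * Aᴴ
      + (lam : ℂ) • (1 : Matrix (Fin M) (Fin M) ℂ)).PosDef := by
  have h1 : (A * Matrix.diagonal (fun k => (s k : ℂ)) * Aᴴ).PosSemidef :=
    (Matrix.posSemidef_diagonal_iff.mpr fun k => by
      exact_mod_cast (hs k)).mul_mul_conjTranspose_same A
  have h2 : ((lam : ℂ) • (1 : Matrix (Fin M) (Fin M) ℂ)).PosDef := by
    rw [Matrix.smul_one_eq_diagonal]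
    exact Matrix.posDef_diagonal_iff.mpr fun i => by exact_mod_cast hlam
  exact Matrix.PosDef.posSemidef_add h1 h2

/-- Schur complement characterization specialized to our setting. -/
lemma schurIff {M N : ℕ} (Y : Matrix (Fin M) (Fin N) ℂ) {Q : Matrix (Fin M) (Fin M) ℂ}
    (hQ : Q.PosDef) (U : Matrix (Fin N) (Fin N) ℂ) :
    (Matrix.fromBlocks U Yᴴ Y Q).PosSemidef ↔ (U - Yᴴ * Q⁻¹ * Y).PosSemidef := by
  haveI := hQ.isUnit.invertible
  have h := Matrix.PosDef.fromBlocks₂₂ U Yᴴ hQ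
  rwa [Matrix.conjTranspose_conjTranspose] at h

lemma traceEq {M N : ℕ} (hN : 0 < N) (Y : Matrix (Fin M) (Fin N) ℂ)
    (Q : Matrix (Fin M) (Fin M) ℂ) :
    (1 / (N : ℝ)) * ((Yᴴ * (Q⁻¹ * Y)).trace).re
      = ((Q⁻¹ * (((N : ℂ))⁻¹ • (Y * Yᴴ))).trace).re := by
  have h1 : Q⁻¹ * (((N : ℂ))⁻¹ • (Y * Yᴴ)) = ((N : ℂ))⁻¹ • (Q⁻¹ * (Y * Yᴴ)) := by
    rw [Matrix.mul_smul]
  have h2 : (Yᴴ * (Q⁻¹ * Y)).trace = (Q⁻¹ * (Y * Yᴴ)).trace := by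
    rw [← Matrix.mul_assoc, Matrix.trace_mul_comm, ← Matrix.mul_assoc, Matrix.trace_mul_comm]
  have h3 : ((N : ℂ))⁻¹ = (((N : ℝ)⁻¹ : ℝ) : ℂ) := by push_cast; ring
  rw [h1, Matrix.trace_smul, ← h2, smul_eq_mul, h3, Complex.re_ofReal_mul, one_div]

/-- The SPARROW problem has the same optimal value as the SDP
min (1/N)Tr(U_N) + Tr(S) s.t. [[U_N, Yᴴ],[Y, A S Aᴴ + λ I_M]] ⪰ 0, with the explicit
correspondence of optimal points via U_N = Yᴴ(A S Aᴴ + λ I_M)⁻¹ Y. -/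
theorem sparrow_sdp_equivalence (M K N : ℕ) (hN : 0 < N)
    (A : Matrix (Fin M) (Fin K) ℂ) (Y : Matrix (Fin M) (Fin N) ℂ)
    (lam : ℝ) (hlam : 0 < lam) :
    sInf {r : ℝ | ∃ s : Fin K → ℝ, (∀ k, 0 ≤ s k) ∧
        r = sparrowObj A lam (((N : ℂ))⁻¹ • (Y * Yᴴ)) s} =
      sInf {r : ℝ | ∃ (s : Fin K → ℝ) (U : Matrix (Fin N) (Fin N) ℂ),
        (∀ k, 0 ≤ s k) ∧ U.IsHermitian ∧
        (Matrix.fromBlocks U Yᴴ Y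
          (A * Matrix.diagonal (fun k => (s k : ℂ)) * Aᴴ
            + (lam : ℂ) • (1 : Matrix (Fin M) (Fin M) ℂ))).PosSemidef ∧
        r = (1 / (N : ℝ)) * ((U.trace).re) + ∑ k, s k} ∧
    ∀ s : Fin K → ℝ, (∀ k, 0 ≤ s k) →
      (Matrix.fromBlocks
          (Yᴴ * ((A * Matrix.diagonal (fun k => (s k : ℂ)) * Aᴴ
            + (lam : ℂ) • (1 : Matrix (Fin M) (Fin M) ℂ))⁻¹ * Y)) Yᴴ Y
          (A * Matrix.diagonal (fun k => (s k : ℂ)) * Aᴴ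
            + (lam : ℂ) • (1 : Matrix (Fin M) (Fin M) ℂ))).PosSemidef ∧
      (1 / (N : ℝ)) * (((Yᴴ * ((A * Matrix.diagonal (fun k => (s k : ℂ)) * Aᴴ
            + (lam : ℂ) • (1 : Matrix (Fin M) (Fin M) ℂ))⁻¹ * Y)).trace).re) + ∑ k, s k =
        sparrowObj A lam (((N : ℂ))⁻¹ • (Y * Yᴴ)) s := by
  set Q : (Fin K → ℝ) → Matrix (Fin M) (Fin M) ℂ := fun s =>
    A * Matrix.diagonal (fun k => (s k : ℂ)) * Aᴴ
      + (lam : ℂ) • (1 : Matrix (Fin M) (Fin M) ℂ) with hQdef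
  have hQpd : ∀ s : Fin K → ℝ, (∀ k, 0 ≤ s k) → (Q s).PosDef :=
    fun s hs => QposDef A lam hlam s hs
  -- explicit point is feasible and achieves the sparrow value
  have hpoint : ∀ s : Fin K → ℝ, (∀ k, 0 ≤ s k) →
      (Matrix.fromBlocks (Yᴴ * ((Q s)⁻¹ * Y)) Yᴴ Y (Q s)).PosSemidef ∧
      (1 / (N : ℝ)) * (((Yᴴ * ((Q s)⁻¹ * Y)).trace).re) + ∑ k, s k
        = sparrowObj A lam (((N : ℂ))⁻¹ • (Y * Yᴴ)) s := by
    intro s hs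
    constructor
    · rw [schurIff Y (hQpd s hs)]
      have : Yᴴ * ((Q s)⁻¹ * Y) - Yᴴ * (Q s)⁻¹ * Y = 0 := by rw [Matrix.mul_assoc]; simp
      rw [this]
      exact Matrix.PosSemidef.zero
    · rw [sparrowObj, ← traceEq hN Y (Q s)]
  -- the sparrow value is nonnegative-ish: bounded below by ∑ s ≥ 0, in fact ≥ 0
  have hval_nonneg : ∀ s : Fin K → ℝ, (∀ k, 0 ≤ s k) →
      0 ≤ sparrowObj A lam (((N : ℂ))⁻¹ • (Y * Yᴴ)) s := by
    intro s hs
    rw [← (hpoint s hs).2]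
    have hpsd : (Yᴴ * ((Q s)⁻¹ * Y)).PosSemidef := by
      have := (hQpd s hs).inv.posSemidef.conjTranspose_mul_mul_same Y
      rwa [Matrix.mul_assoc] at this
    have h1 : 0 ≤ (1 / (N : ℝ)) * (((Yᴴ * ((Q s)⁻¹ * Y)).trace).re) :=
      mul_nonneg (by positivity) (traceReNonneg hpsd)
    have h2 : 0 ≤ ∑ k, s k := Finset.sum_nonneg fun k _ => hs k
    linarith
  set S1 := {r : ℝ | ∃ s : Fin K → ℝ, (∀ k, 0 ≤ s k) ∧
      r = sparrowObj A lam (((N : ℂ))⁻¹ • (Y * Yᴴ)) s} with hS1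
  set S2 := {r : ℝ | ∃ (s : Fin K → ℝ) (U : Matrix (Fin N) (Fin N) ℂ),
      (∀ k, 0 ≤ s k) ∧ U.IsHermitian ∧
      (Matrix.fromBlocks U Yᴴ Y (Q s)).PosSemidef ∧
      r = (1 / (N : ℝ)) * ((U.trace).re) + ∑ k, s k} with hS2
  have hsub : S1 ⊆ S2 := by
    rintro r ⟨s, hs, rfl⟩
    refine ⟨s, Yᴴ * ((Q s)⁻¹ * Y), hs, ?_, (hpoint s hs).1, ((hpoint s hs).2).symm⟩
    have hpsd : (Yᴴ * ((Q s)⁻¹ * Y)).PosSemidef := by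
      have := (hQpd s hs).inv.posSemidef.conjTranspose_mul_mul_same Y
      rwa [Matrix.mul_assoc] at this
    exact hpsd.isHermitian
  have hge : ∀ r ∈ S2, ∃ r' ∈ S1, r' ≤ r := by
    rintro r ⟨s, U, hs, hU, hblk, rfl⟩
    refine ⟨sparrowObj A lam (((N : ℂ))⁻¹ • (Y * Yᴴ)) s, ⟨s, hs, rfl⟩, ?_⟩
    rw [← (hpoint s hs).2]
    have hschur := (schurIff Y (hQpd s hs) U).mp hblk
    have htr : 0 ≤ ((U - Yᴴ * (Q s)⁻¹ * Y).trace).re := traceReNonneg hschur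
    rw [Matrix.trace_sub, Complex.sub_re] at htr
    have : ((Yᴴ * ((Q s)⁻¹ * Y)).trace).re ≤ (U.trace).re := by
      rw [Matrix.mul_assoc] at htr; linarith
    have hNpos : 0 ≤ 1 / (N : ℝ) := by positivity
    nlinarith
  have hne1 : S1.Nonempty := ⟨_, ⟨fun _ => 0, fun _ => le_rfl, rfl⟩⟩
  have hbdd1 : BddBelow S1 := ⟨0, by rintro r ⟨s, hs, rfl⟩; exact hval_nonneg s hs⟩
  have hbdd2 : BddBelow S2 := by
    refine ⟨0, fun r hr => ?_⟩
    obtain ⟨r', hr', hle⟩ := hge r hr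
    obtain ⟨s, hs, rfl⟩ := hr'
    exact le_trans (hval_nonneg s hs) hle
  refine ⟨le_antisymm ?_ (csInf_le_csInf hbdd2 hne1 hsub), fun s hs => hpoint s hs⟩
  refine le_csInf (hne1.mono hsub) fun r hr => ?_
  obtain ⟨r', hr', hle⟩ := hge r hr
  exact le_trans (csInf_le hbdd1 hr') hle
end

section
/- The SPARROW problem min over nonnegative diagonal S of Tr((A S Aᴴ + λ I_M)⁻¹ R̂) + Tr(S) has the same optimal value as the semidefinite program min over (S nonnegative diagonal, U_M Hermitian M×M) of Tr(U_M R̂) + Tr(S) subject to [[U_M, I_M],[I_M, A S Aᴴ + λ I_M]] ⪰ 0. -/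
open scoped Matrix ComplexOrder

lemma psd_trace_nonneg {n : ℕ} {P : Matrix (Fin n) (Fin n) ℂ} (hP : P.PosSemidef) :
    0 ≤ P.trace := by
  rw [Matrix.trace]
  apply Finset.sum_nonneg
  intro i _
  exact hP.diag_nonneg

lemma psd_mul_trace_nonneg {n : ℕ} {P Q : Matrix (Fin n) (Fin n) ℂ}
    (hP : P.PosSemidef) (hQ : Q.PosSemidef) : 0 ≤ ((P * Q).trace).re := by
  obtain ⟨B, rfl⟩ : ∃ B : Matrix (Fin n) (Fin n) ℂ, P = Bᴴ * B := by
    classical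
    open MatrixOrder in
    obtain ⟨X, hX, -, rfl⟩ := CFC.exists_sqrt_of_isSelfAdjoint_of_quasispectrumRestricts
      hP.isHermitian (QuasispectrumRestricts.nnreal_of_nonneg hP.nonneg)
    exact ⟨X, by rw [← Matrix.star_eq_conjTranspose, hX.star_eq]⟩
  have h1 : (Bᴴ * B * Q).trace = (B * Q * Bᴴ).trace := by
    rw [Matrix.mul_assoc, Matrix.trace_mul_comm]
  have h2 : (B * Q * Bᴴ).PosSemidef := hQ.mul_mul_conjTranspose_same B
  have := psd_trace_nonneg h2
  rw [h1]
  exact (Complex.le_def.mp this).1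

/-- The SPARROW problem has the same optimal value as the SDP
min Tr(U_M R̂) + Tr(S) s.t. [[U_M, I_M],[I_M, A S Aᴴ + λ I_M]] ⪰ 0. -/
theorem sparrow_sdp_equivalence_covariance (M K : ℕ)
    (A : Matrix (Fin M) (Fin K) ℂ) (R : Matrix (Fin M) (Fin M) ℂ) (hR : R.PosSemidef)
    (lam : ℝ) (hlam : 0 < lam) :
    sInf {r : ℝ | ∃ s : Fin K → ℝ, (∀ k, 0 ≤ s k) ∧ r = sparrowObj A lam R s} =
      sInf {r : ℝ | ∃ (s : Fin K → ℝ) (U : Matrix (Fin M) (Fin M) ℂ),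
        (∀ k, 0 ≤ s k) ∧ U.IsHermitian ∧
        (Matrix.fromBlocks U (1 : Matrix (Fin M) (Fin M) ℂ) (1 : Matrix (Fin M) (Fin M) ℂ)
          (A * Matrix.diagonal (fun k => (s k : ℂ)) * Aᴴ
            + (lam : ℂ) • (1 : Matrix (Fin M) (Fin M) ℂ))).PosSemidef ∧
        r = ((U * R).trace).re + ∑ k, s k} := by
  set B : (Fin K → ℝ) → Matrix (Fin M) (Fin M) ℂ := fun s =>
    A * Matrix.diagonal (fun k => (s k : ℂ)) * Aᴴ
      + (lam : ℂ) • (1 : Matrix (Fin M) (Fin M) ℂ) with hBdef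
  have hBpd : ∀ s : Fin K → ℝ, (∀ k, 0 ≤ s k) → (B s).PosDef := by
    intro s hs
    apply Matrix.PosDef.posSemidef_add
    · exact (Matrix.PosSemidef.diagonal fun k => by
        exact Complex.zero_le_real.mpr (hs k)).mul_mul_conjTranspose_same A
    · have h1 : ((lam : ℂ) • (1 : Matrix (Fin M) (Fin M) ℂ))
          = Matrix.diagonal (fun _ : Fin M => (lam : ℂ)) := by
        ext i j
        by_cases h : i = j <;>
          simp [Matrix.smul_apply, Matrix.one_apply, Matrix.diagonal_apply, h]
      rw [h1]
      exact Matrix.posDef_diagonal_iff.mpr fun _ => by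
        exact Complex.zero_lt_real.mpr hlam
  -- every sparrow point gives an SDP point with equal value
  have claimA : ∀ s : Fin K → ℝ, (∀ k, 0 ≤ s k) →
      ∃ (s' : Fin K → ℝ) (U : Matrix (Fin M) (Fin M) ℂ),
        (∀ k, 0 ≤ s' k) ∧ U.IsHermitian ∧
        (Matrix.fromBlocks U 1 1 (B s')).PosSemidef ∧
        sparrowObj A lam R s = ((U * R).trace).re + ∑ k, s' k := by
    intro s hs
    have hpd := hBpd s hs
    haveI : Invertible (B s) := hpd.isUnit.invertible
    refine ⟨s, (B s)⁻¹, hs, hpd.inv.1, ?_, rfl⟩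
    have h0 : ((B s)⁻¹ - 1 * (B s)⁻¹ * (1 : Matrix (Fin M) (Fin M) ℂ)ᴴ).PosSemidef := by
      simpa using (Matrix.PosSemidef.zero (n := Fin M) (R := ℂ))
    have := (Matrix.PosDef.fromBlocks₂₂ (B s)⁻¹ 1 hpd).mpr h0
    simpa using this
  -- every SDP point dominates the sparrow point with the same s
  have claimB : ∀ (s : Fin K → ℝ) (U : Matrix (Fin M) (Fin M) ℂ), (∀ k, 0 ≤ s k) →
      (Matrix.fromBlocks U 1 1 (B s)).PosSemidef →
      sparrowObj A lam R s ≤ ((U * R).trace).re + ∑ k, s k := by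
    intro s U hs hPSD
    have hpd := hBpd s hs
    haveI : Invertible (B s) := hpd.isUnit.invertible
    have h0 : (Matrix.fromBlocks U 1 (1 : Matrix (Fin M) (Fin M) ℂ)ᴴ (B s)).PosSemidef := by
      simpa using hPSD
    have h1 := (Matrix.PosDef.fromBlocks₂₂ U 1 hpd).mp h0
    have h2 : (U - (B s)⁻¹).PosSemidef := by simpa using h1
    have h3 : U * R = (U - (B s)⁻¹) * R + (B s)⁻¹ * R := by
      rw [Matrix.sub_mul]; abel
    have h4 : ((U * R).trace).re
        = (((U - (B s)⁻¹) * R).trace).re + (((B s)⁻¹ * R).trace).re := by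
      rw [h3, Matrix.trace_add, Complex.add_re]
    have h5 := psd_mul_trace_nonneg h2 hR
    unfold sparrowObj
    rw [h4]
    have : (((B s)⁻¹ * R).trace).re
        ≤ (((U - (B s)⁻¹) * R).trace).re + (((B s)⁻¹ * R).trace).re := by linarith
    exact add_le_add_left this _
  -- sparrow values are nonnegative
  have claimC : ∀ s : Fin K → ℝ, (∀ k, 0 ≤ s k) → 0 ≤ sparrowObj A lam R s := by
    intro s hs
    have hpd := hBpd s hs
    have h1 := psd_mul_trace_nonneg hpd.inv.posSemidef hR
    have h2 : 0 ≤ ∑ k, s k := Finset.sum_nonneg fun k _ => hs k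
    unfold sparrowObj
    linarith
  apply le_antisymm
  · apply le_csInf (by
      obtain ⟨s', U, h⟩ := claimA 0 (fun _ => le_refl 0)
      exact ⟨sparrowObj A lam R 0, s', U, h⟩)
    rintro r ⟨s, U, hs, _, hPSD, rfl⟩
    calc sInf {r : ℝ | ∃ s : Fin K → ℝ, (∀ k, 0 ≤ s k) ∧ r = sparrowObj A lam R s}
        ≤ sparrowObj A lam R s :=
          csInf_le ⟨0, by rintro r ⟨s', hs', rfl⟩; exact claimC s' hs'⟩ ⟨s, hs, rfl⟩
      _ ≤ ((U * R).trace).re + ∑ k, s k := claimB s U hs hPSD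
  · apply csInf_le_csInf
    · refine ⟨0, ?_⟩
      rintro r ⟨s, U, hs, _, hPSD, rfl⟩
      exact le_trans (claimC s hs) (claimB s U hs hPSD)
    · exact ⟨sparrowObj A lam R 0, 0, fun _ => le_refl 0, rfl⟩
    · rintro r ⟨s, hs, rfl⟩
      exact claimA s hs
end

section
/- Let Q ∈ ℂ^{M×M} be Hermitian positive definite, R̂ Hermitian positive semidefinite, a ∈ ℂ^M nonzero, and s₀ ≥ 0. The minimizer over d ≥ −s₀ of g(d) = −d·(aᴴ Q⁻¹ R̂ Q⁻¹ a)/(1 + d·aᴴ Q⁻¹ a) + d is d* = max( (√(aᴴ Q⁻¹ R̂ Q⁻¹ a) − 1)/(aᴴ Q⁻¹ a), −s₀ ). -/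
open scoped Matrix ComplexOrder

private lemma amgm_aux {α u : ℝ} (hα : 0 ≤ α) (hu : 0 < u) :
    2 * Real.sqrt α ≤ u + α / u := by
  have h := Real.sq_sqrt hα
  rw [← sub_nonneg]
  have heq : u + α / u - 2 * Real.sqrt α = (u - Real.sqrt α) ^ 2 / u := by
    field_simp
    nlinarith [h]
  rw [heq]
  positivity

private lemma mono_aux {α u v : ℝ} (hα : 0 ≤ α) (hu : 0 < u) (huv : u ≤ v)
    (h : α ≤ u * v) : u + α / u ≤ v + α / v := by
  have hv : 0 < v := hu.trans_le huv
  rw [← sub_nonneg]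
  have heq : v + α / v - (u + α / u) = (v - u) * (u * v - α) / (u * v) := by
    field_simp
    ring
  rw [heq]
  apply div_nonneg _ (by positivity)
  exact mul_nonneg (by linarith) (by linarith)

/-- The minimizer over d ≥ −s₀ of
g(d) = −d·(aᴴQ⁻¹R̂Q⁻¹a)/(1 + d·aᴴQ⁻¹a) + d is
d* = max((√(aᴴQ⁻¹R̂Q⁻¹a) − 1)/(aᴴQ⁻¹a), −s₀), where the feasible set lies strictly to
the right of the pole −1/(aᴴQ⁻¹a). -/
theorem coordinate_descent_step (M : ℕ)
    (Q : Matrix (Fin M) (Fin M) ℂ) (hQ : Q.PosDef)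
    (R : Matrix (Fin M) (Fin M) ℂ) (hR : R.PosSemidef)
    (a : Fin M → ℂ) (ha : a ≠ 0) (s0 : ℝ) (hs0 : 0 ≤ s0)
    (hpole : s0 < 1 / (star a ⬝ᵥ (Q⁻¹ *ᵥ a)).re) :
    let β : ℝ := (star a ⬝ᵥ (Q⁻¹ *ᵥ a)).re
    let α : ℝ := (star a ⬝ᵥ ((Q⁻¹ * R * Q⁻¹) *ᵥ a)).re
    let g : ℝ → ℝ := fun d => -(d * α) / (1 + d * β) + d
    let dstar : ℝ := max ((Real.sqrt α - 1) / β) (-s0)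
    (-s0 ≤ dstar) ∧ ∀ d : ℝ, -s0 ≤ d → g dstar ≤ g d := by
  intro β α g dstar
  have hQinv : (Q⁻¹).PosDef := hQ.inv
  have hβ : 0 < β := by
    have h := hQinv.dotProduct_mulVec_pos ha
    simpa [β, Complex.lt_def] using (Complex.lt_def.mp h).1
  have hP : (Q⁻¹ * R * Q⁻¹).PosSemidef := by
    have h := hR.mul_mul_conjTranspose_same Q⁻¹
    rwa [hQinv.isHermitian.eq] at h
  have hα : 0 ≤ α := by
    have h := hP.dotProduct_mulVec_nonneg a
    simpa [α, Complex.le_def] using (Complex.le_def.mp h).1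
  have hsβ : s0 * β < 1 := by
    rw [lt_div_iff₀ hβ] at hpole; linarith
  -- rewrite g
  have hg : ∀ d : ℝ, 0 < 1 + d * β →
      g d = ((1 + d * β) + α / (1 + d * β) - (1 + α)) / β := by
    intro d hd
    simp only [g]
    field_simp
    ring
  refine ⟨le_max_right _ _, ?_⟩
  intro d hd
  have hud : 0 < 1 + d * β := by nlinarith
  rw [hg d hud]
  rcases le_or_gt (-s0) ((Real.sqrt α - 1) / β) with hc | hc
  · -- dstar = (√α - 1)/β
    have hds : dstar = (Real.sqrt α - 1) / β := max_eq_left hc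
    have hsq : (1 : ℝ) - s0 * β ≤ Real.sqrt α := by
      rw [le_div_iff₀ hβ] at hc; nlinarith
    have hsqpos : 0 < Real.sqrt α := by linarith
    have hu : 1 + dstar * β = Real.sqrt α := by
      rw [hds]; field_simp; ring
    rw [hg dstar (by rw [hu]; exact hsqpos), hu]
    have hdiv : α / Real.sqrt α = Real.sqrt α := Real.div_sqrt
    rw [hdiv]
    apply (div_le_div_iff_of_pos_right hβ).mpr
    linarith [amgm_aux hα hud]
  · -- dstar = -s0
    have hds : dstar = -s0 := max_eq_right hc.le
    have hsq : Real.sqrt α < 1 - s0 * β := by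
      rw [div_lt_iff₀ hβ] at hc; nlinarith
    have hu0 : 0 < 1 + dstar * β := by rw [hds]; nlinarith
    rw [hg dstar hu0, hds]
    apply (div_le_div_iff_of_pos_right hβ).mpr
    have h1 : (0:ℝ) < 1 + (-s0) * β := by nlinarith
    have h2 : 1 + (-s0) * β ≤ 1 + d * β := by nlinarith
    have h3 : α ≤ (1 + (-s0) * β) * (1 + d * β) := by
      have := Real.sq_sqrt hα
      have hsn := Real.sqrt_nonneg α
      nlinarith
    linarith [mono_aux hα h1 h2 h3]
end

section
/- The gridless SPARROW SDP (minimize (1/N)Tr(U_N) + (1/M)Tr(Toep(u)) subject to [[U_N, Yᴴ],[Y, Toep(u) + λ I_M]] ⪰ 0 and Toep(u) ⪰ 0) and the MMV atomic-norm SDP (minimize (1/2)‖Y − Y₀‖_F² + (λ√N/2)(Tr(V_N) + (1/M)Tr(Toep(v))) subject to [[V_N, Y₀ᴴ],[Y₀, Toep(v)]] ⪰ 0 and Toep(v) ⪰ 0) are equivalent: after scaling the SPARROW objective by λN/2, both problems have the same optimal value, and optimal solutions are related by u* = v*/√N. -/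
open scoped Matrix ComplexOrder

/-- Hermitian Toeplitz matrix with first column u. -/
noncomputable def Toep {M : ℕ} (u : Fin M → ℂ) : Matrix (Fin M) (Fin M) ℂ :=
  Matrix.of fun i j =>
    if (j : ℕ) ≤ (i : ℕ) then
      u ⟨(i : ℕ) - (j : ℕ), lt_of_le_of_lt (Nat.sub_le _ _) i.isLt⟩
    else
      star (u ⟨(j : ℕ) - (i : ℕ), lt_of_le_of_lt (Nat.sub_le _ _) j.isLt⟩)

/-- The gridless SPARROW objective, scaled by λN/2. -/
noncomputable def glSparrowObj {M N : ℕ} (lam : ℝ)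
    (u : Fin M → ℂ) (U : Matrix (Fin N) (Fin N) ℂ) : ℝ :=
  (lam * N / 2) * ((1 / (N : ℝ)) * (U.trace).re + (1 / (M : ℝ)) * ((Toep u).trace).re)

/-- Feasibility for the gridless SPARROW SDP. -/
def glSparrowFeas {M N : ℕ} (Y : Matrix (Fin M) (Fin N) ℂ) (lam : ℝ)
    (u : Fin M → ℂ) (U : Matrix (Fin N) (Fin N) ℂ) : Prop :=
  U.IsHermitian ∧
  (Matrix.fromBlocks U Yᴴ Y (Toep u + (lam : ℂ) • (1 : Matrix (Fin M) (Fin M) ℂ))).PosSemidef ∧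
  (Toep u).PosSemidef

/-- The MMV atomic-norm SDP objective. -/
noncomputable def anmObj {M N : ℕ} (Y : Matrix (Fin M) (Fin N) ℂ) (lam : ℝ)
    (v : Fin M → ℂ) (V : Matrix (Fin N) (Fin N) ℂ) (Y0 : Matrix (Fin M) (Fin N) ℂ) : ℝ :=
  (1 / 2) * frobSq (Y - Y0) +
    (lam * Real.sqrt N / 2) * ((V.trace).re + (1 / (M : ℝ)) * ((Toep v).trace).re)

/-- Feasibility for the MMV atomic-norm SDP. -/
def anmFeas {M N : ℕ} (v : Fin M → ℂ) (V : Matrix (Fin N) (Fin N) ℂ)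
    (Y0 : Matrix (Fin M) (Fin N) ℂ) : Prop :=
  V.IsHermitian ∧ (Matrix.fromBlocks V Y0ᴴ Y0 (Toep v)).PosSemidef ∧ (Toep v).PosSemidef

open Matrix

lemma toep_smul {M : ℕ} (r : ℝ) (u : Fin M → ℂ) : Toep ((r:ℂ) • u) = (r:ℂ) • Toep u := by
  ext i j
  simp only [Toep, of_apply, Pi.smul_apply, smul_eq_mul, Matrix.smul_apply]
  split
  · rfl
  · simp [star_mul', Complex.star_def, Complex.conj_ofReal, mul_comm]

lemma toep_zero {M : ℕ} : Toep (0 : Fin M → ℂ) = 0 := by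
  ext i j; simp [Toep]

lemma psd_real_smul {n : Type*} [Fintype n] {A : Matrix n n ℂ} (hA : A.PosSemidef)
    {r : ℝ} (hr : 0 ≤ r) : ((r:ℂ) • A).PosSemidef := by
  refine posSemidef_iff_dotProduct_mulVec.mpr ⟨?_, fun x => ?_⟩
  · rw [IsHermitian, conjTranspose_smul, hA.1.eq, Complex.star_def, Complex.conj_ofReal]
  · rw [smul_mulVec, dotProduct_smul, smul_eq_mul]
    exact mul_nonneg (by exact_mod_cast hr) (hA.dotProduct_mulVec_nonneg x)

lemma psd_trace_re_nonneg {n : Type*} [Fintype n] [DecidableEq n] {A : Matrix n n ℂ}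
    (hA : A.PosSemidef) : 0 ≤ A.trace.re := by
  have h : (0:ℂ) ≤ A.trace := by
    rw [Matrix.trace]
    refine Finset.sum_nonneg fun i _ => ?_
    have := hA.dotProduct_mulVec_nonneg (Pi.single i 1)
    simpa [Matrix.mulVec_single, dotProduct, Pi.single_apply, Matrix.diag] using this
  exact (Complex.le_def.mp h).1

lemma frobSq_eq_trace {m n : Type*} [Fintype m] [Fintype n] (X : Matrix m n ℂ) :
    frobSq X = (Xᴴ * X).trace.re := by
  rw [frobSq, Matrix.trace]
  rw [Finset.sum_comm]
  simp only [Matrix.diag, Matrix.mul_apply, conjTranspose_apply]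
  rw [Complex.re_sum]
  congr 1; ext j
  rw [Complex.re_sum]
  congr 1; ext i
  simp [Complex.normSq_eq_norm_sq, ← Complex.normSq_eq_conj_mul_self, Complex.normSq]
  ring_nf
  rw [Complex.sq_norm, Complex.normSq_apply]
  ring

lemma frobSq_nonneg {m n : Type*} [Fintype m] [Fintype n] (X : Matrix m n ℂ) : 0 ≤ frobSq X :=
  Finset.sum_nonneg fun _ _ => Finset.sum_nonneg fun _ _ => sq_nonneg _

lemma posSemidef_fromBlocks_diag {m n : Type*} [Fintype m] [Fintype n]
    {A : Matrix m m ℂ} {B : Matrix n n ℂ} (hA : A.PosSemidef) (hB : B.PosSemidef) :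
    (fromBlocks A 0 0 B).PosSemidef := by
  refine posSemidef_iff_dotProduct_mulVec.mpr ⟨?_, fun x => ?_⟩
  · rw [IsHermitian, fromBlocks_conjTranspose, hA.1.eq, hB.1.eq]
    simp
  · have h1 := hA.dotProduct_mulVec_nonneg (x ∘ Sum.inl)
    have h2 := hB.dotProduct_mulVec_nonneg (x ∘ Sum.inr)
    have : star x ⬝ᵥ (fromBlocks A 0 0 B *ᵥ x) =
        star (x ∘ Sum.inl) ⬝ᵥ (A *ᵥ (x ∘ Sum.inl)) + star (x ∘ Sum.inr) ⬝ᵥ (B *ᵥ (x ∘ Sum.inr)) := by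
      simp [Matrix.fromBlocks_mulVec, dotProduct, Fintype.sum_sum_type, Sum.elim_inl, Sum.elim_inr]
    rw [this]
    exact add_nonneg h1 h2

lemma psd_block2 {M N : ℕ} (Z : Matrix (Fin M) (Fin N) ℂ) {lam : ℝ} (hlam : 0 < lam) :
    (fromBlocks ((lam:ℂ)⁻¹ • (Zᴴ * Z)) Zᴴ Z ((lam:ℂ) • (1 : Matrix (Fin M) (Fin M) ℂ))).PosSemidef := by
  set t : ℝ := Real.sqrt lam with ht
  have ht0 : 0 < t := Real.sqrt_pos.mpr hlam
  have htt : (t:ℂ) * (t:ℂ) = (lam:ℂ) := by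
    rw [← Complex.ofReal_mul, Real.mul_self_sqrt hlam.le]
  set W : Matrix (Fin M ⊕ Fin M) (Fin N ⊕ Fin M) ℂ :=
    fromBlocks ((t:ℂ)⁻¹ • Z) ((t:ℂ) • 1) 0 0 with hW
  have key : fromBlocks ((lam:ℂ)⁻¹ • (Zᴴ * Z)) Zᴴ Z ((lam:ℂ) • (1 : Matrix (Fin M) (Fin M) ℂ)) =
      Wᴴ * W := by
    rw [hW, fromBlocks_conjTranspose, fromBlocks_multiply]
    simp only [conjTranspose_smul, conjTranspose_zero, conjTranspose_one,
      Matrix.smul_mul, Matrix.mul_smul, Matrix.mul_zero, Matrix.zero_mul, Matrix.mul_one,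
      Matrix.one_mul, add_zero, zero_add, smul_smul, Complex.star_def, Complex.conj_ofReal,
      map_inv₀]
    rw [mul_inv_cancel₀ (show (t:ℂ) ≠ 0 by exact_mod_cast ht0.ne'),
      inv_mul_cancel₀ (show (t:ℂ) ≠ 0 by exact_mod_cast ht0.ne'), one_smul, one_smul, ← mul_inv, htt]
  rw [key]
  exact posSemidef_conjTranspose_mul_self _

lemma psd_block_scale {M N : ℕ} {V : Matrix (Fin N) (Fin N) ℂ} {Y0 : Matrix (Fin M) (Fin N) ℂ}
    {T : Matrix (Fin M) (Fin M) ℂ}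
    (h : (fromBlocks V Y0ᴴ Y0 T).PosSemidef) {c : ℝ} (hc : 0 < c) :
    (fromBlocks ((c:ℂ) • V) Y0ᴴ Y0 ((c:ℂ)⁻¹ • T)).PosSemidef := by
  set s : ℝ := Real.sqrt c with hs
  have hs0 : 0 < s := Real.sqrt_pos.mpr hc
  have hsne : (s:ℂ) ≠ 0 := by exact_mod_cast hs0.ne'
  have hss : (s:ℂ) * (s:ℂ) = (c:ℂ) := by
    rw [← Complex.ofReal_mul, Real.mul_self_sqrt hc.le]
  set D : Matrix (Fin N ⊕ Fin M) (Fin N ⊕ Fin M) ℂ :=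
    fromBlocks ((s:ℂ) • 1) 0 0 ((s:ℂ)⁻¹ • 1) with hD
  have key : fromBlocks ((c:ℂ) • V) Y0ᴴ Y0 ((c:ℂ)⁻¹ • T) = Dᴴ * fromBlocks V Y0ᴴ Y0 T * D := by
    rw [hD, fromBlocks_conjTranspose, fromBlocks_multiply, fromBlocks_multiply]
    simp only [conjTranspose_smul, conjTranspose_zero, conjTranspose_one,
      Matrix.smul_mul, Matrix.mul_smul, Matrix.mul_zero, Matrix.zero_mul, Matrix.mul_one,
      Matrix.one_mul, add_zero, zero_add, smul_smul, Complex.star_def, Complex.conj_ofReal,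
      map_inv₀]
    rw [mul_inv_cancel₀ hsne, inv_mul_cancel₀ hsne, one_smul, one_smul, hss, ← mul_inv, hss]
  rw [key]
  exact h.conjTranspose_mul_mul_same D

lemma psd_block_B {M N : ℕ} {T : Matrix (Fin M) (Fin M) ℂ} (hT : T.PosSemidef)
    (X : Matrix (Fin M) (Fin N) ℂ) {c : ℝ} (hc : 0 < c) :
    (fromBlocks ((c:ℂ)⁻¹ • (Xᴴ * T * X)) (Xᴴ * T) (T * X) ((c:ℂ) • T)).PosSemidef := by
  set s : ℝ := Real.sqrt c with hs
  have hs0 : 0 < s := Real.sqrt_pos.mpr hc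
  have hsne : (s:ℂ) ≠ 0 := by exact_mod_cast hs0.ne'
  have hss : (s:ℂ) * (s:ℂ) = (c:ℂ) := by
    rw [← Complex.ofReal_mul, Real.mul_self_sqrt hc.le]
  set W : Matrix (Fin M ⊕ Fin M) (Fin N ⊕ Fin M) ℂ :=
    fromBlocks ((s:ℂ)⁻¹ • X) ((s:ℂ) • 1) 0 0 with hW
  set G : Matrix (Fin M ⊕ Fin M) (Fin M ⊕ Fin M) ℂ := fromBlocks T 0 0 0 with hG
  have key : fromBlocks ((c:ℂ)⁻¹ • (Xᴴ * T * X)) (Xᴴ * T) (T * X) ((c:ℂ) • T) = Wᴴ * G * W := by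
    rw [hW, hG, fromBlocks_conjTranspose, fromBlocks_multiply, fromBlocks_multiply]
    simp only [conjTranspose_smul, conjTranspose_zero, conjTranspose_one,
      Matrix.smul_mul, Matrix.mul_smul, Matrix.mul_zero, Matrix.zero_mul, Matrix.mul_one,
      Matrix.one_mul, add_zero, zero_add, smul_smul, Complex.star_def, Complex.conj_ofReal,
      map_inv₀]
    rw [mul_inv_cancel₀ hsne, inv_mul_cancel₀ hsne, one_smul, one_smul, hss, ← mul_inv, hss,
      Matrix.mul_assoc]
  rw [key]
  exact (posSemidef_fromBlocks_diag hT Matrix.PosSemidef.zero).conjTranspose_mul_mul_same W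


lemma arith1 {a b f c lam Mr : ℝ} (hc : 0 < c) (hlam : 0 < lam) (hM : 0 < Mr) :
    (lam * (c*c) / 2) * ((1/(c*c))*(c*a + lam⁻¹*f) + (1/Mr)*(c⁻¹*b))
      = (1/2)*f + (lam*c/2)*(a + (1/Mr)*b) := by
  field_simp
  ring

lemma lemA {M N : ℕ} (hM : 0 < M) (hN : 0 < N) (Y : Matrix (Fin M) (Fin N) ℂ) {lam : ℝ}
    (hlam : 0 < lam) {v : Fin M → ℂ} {V : Matrix (Fin N) (Fin N) ℂ}
    {Y0 : Matrix (Fin M) (Fin N) ℂ} (h : anmFeas v V Y0) :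
    glSparrowFeas Y lam (((Real.sqrt N : ℂ))⁻¹ • v)
      ((Real.sqrt N : ℂ) • V + (lam:ℂ)⁻¹ • ((Y - Y0)ᴴ * (Y - Y0))) ∧
    glSparrowObj lam (((Real.sqrt N : ℂ))⁻¹ • v)
      ((Real.sqrt N : ℂ) • V + (lam:ℂ)⁻¹ • ((Y - Y0)ᴴ * (Y - Y0))) = anmObj Y lam v V Y0 := by
  set c : ℝ := Real.sqrt N with hcdef
  have hc : 0 < c := Real.sqrt_pos.mpr (by exact_mod_cast hN)
  have hcne : (c:ℂ) ≠ 0 := by exact_mod_cast hc.ne'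
  have hN2 : (N:ℝ) = c * c := (Real.mul_self_sqrt (Nat.cast_nonneg N)).symm
  set Z : Matrix (Fin M) (Fin N) ℂ := Y - Y0 with hZ
  have hu : (((c:ℝ) : ℂ))⁻¹ • v = (((c⁻¹ : ℝ)) : ℂ) • v := by push_cast; ring_nf
  have hT : Toep ((((c:ℝ):ℂ))⁻¹ • v) = ((c⁻¹:ℝ):ℂ) • Toep v := by
    rw [hu, toep_smul]
  constructor
  · refine ⟨?_, ?_, ?_⟩
    · apply IsHermitian.add
      · rw [IsHermitian, conjTranspose_smul, h.1.eq, Complex.star_def, Complex.conj_ofReal]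
      · rw [IsHermitian, conjTranspose_smul, (posSemidef_conjTranspose_mul_self Z).1.eq,
          star_inv₀, Complex.star_def, Complex.conj_ofReal]
    · have split : fromBlocks ((c:ℂ) • V + (lam:ℂ)⁻¹ • (Zᴴ * Z)) Yᴴ Y
          (Toep ((((c:ℝ):ℂ))⁻¹ • v) + (lam:ℂ) • (1 : Matrix (Fin M) (Fin M) ℂ)) =
          fromBlocks ((c:ℂ) • V) Y0ᴴ Y0 ((c:ℂ)⁻¹ • Toep v)
            + fromBlocks ((lam:ℂ)⁻¹ • (Zᴴ * Z)) Zᴴ Z ((lam:ℂ) • 1) := by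
        rw [fromBlocks_add, hZ, ← conjTranspose_add, add_sub_cancel, hT, Complex.ofReal_inv]
      rw [split]
      exact (psd_block_scale h.2.1 hc).add (psd_block2 Z hlam)
    · rw [hT]
      exact psd_real_smul h.2.2 (inv_nonneg.mpr hc.le)
  · rw [glSparrowObj, anmObj]
    have htr1 : (((c:ℂ) • V + (lam:ℂ)⁻¹ • (Zᴴ * Z)).trace).re
        = c * V.trace.re + lam⁻¹ * frobSq Z := by
      rw [trace_add, trace_smul, trace_smul, Complex.add_re, smul_eq_mul, smul_eq_mul,
        Complex.re_ofReal_mul, ← Complex.ofReal_inv, Complex.re_ofReal_mul, frobSq_eq_trace]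
    have htr2 : ((Toep ((((c:ℝ):ℂ))⁻¹ • v)).trace).re = c⁻¹ * (Toep v).trace.re := by
      rw [hT, trace_smul, smul_eq_mul, Complex.re_ofReal_mul]
    rw [htr1, htr2, hN2, hZ, Real.sqrt_mul_self hc.le]
    exact arith1 hc hlam (by exact_mod_cast hM : (0:ℝ) < (M:ℝ))
lemma frobSq_real_smul {m n : Type*} [Fintype m] [Fintype n] (r : ℝ) (X : Matrix m n ℂ) :
    frobSq ((r:ℂ) • X) = r^2 * frobSq X := by
  simp only [frobSq, Matrix.smul_apply, smul_eq_mul, norm_mul, Complex.norm_real, mul_pow,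
    ← Finset.mul_sum, Real.norm_eq_abs, sq_abs]

lemma lemB {M N : ℕ} (hM : 0 < M) (hN : 0 < N) (Y : Matrix (Fin M) (Fin N) ℂ) {lam : ℝ}
    (hlam : 0 < lam) {u : Fin M → ℂ} {U : Matrix (Fin N) (Fin N) ℂ}
    (h : glSparrowFeas Y lam u U) :
    ∃ (V : Matrix (Fin N) (Fin N) ℂ) (Y0 : Matrix (Fin M) (Fin N) ℂ),
      anmFeas ((Real.sqrt N : ℂ) • u) V Y0 ∧
      anmObj Y lam ((Real.sqrt N : ℂ) • u) V Y0 ≤ glSparrowObj lam u U := by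
  set c : ℝ := Real.sqrt N with hcdef
  have hc : 0 < c := Real.sqrt_pos.mpr (by exact_mod_cast hN)
  have hcne : (c:ℂ) ≠ 0 := by exact_mod_cast hc.ne'
  have hN2 : (N:ℝ) = c * c := (Real.mul_self_sqrt (Nat.cast_nonneg N)).symm
  set T : Matrix (Fin M) (Fin M) ℂ := Toep u with hTdef
  have hT : T.PosSemidef := h.2.2
  have hTH : T.IsHermitian := hT.1
  set Dm : Matrix (Fin M) (Fin M) ℂ := T + (lam:ℂ) • 1 with hDmdef
  have hlamI : ((lam:ℂ) • (1 : Matrix (Fin M) (Fin M) ℂ)).PosDef := by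
    rw [smul_one_eq_diagonal, posDef_diagonal_iff]
    intro i; exact_mod_cast hlam
  have hDm : Dm.PosDef := Matrix.PosDef.posSemidef_add hT hlamI
  have hdet : IsUnit Dm.det := isUnit_iff_ne_zero.mpr hDm.det_pos.ne'
  set K : Matrix (Fin M) (Fin M) ℂ := Dm⁻¹ with hKdef
  have hK1 : Dm * K = 1 := mul_nonsing_inv _ hdet
  have hK2 : K * Dm = 1 := nonsing_inv_mul _ hdet
  have hKH : K.IsHermitian := hDm.1.inv
  haveI : Invertible Dm := Dm.invertibleOfIsUnitDet hdet
  have hSchur : (U - Yᴴ * K * Y).PosSemidef := by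
    have hiff := PosDef.fromBlocks₂₂ U Yᴴ hDm
    rw [conjTranspose_conjTranspose] at hiff
    exact hiff.mp h.2.1
  set X : Matrix (Fin M) (Fin N) ℂ := K * Y with hXdef
  have hXH : Xᴴ = Yᴴ * K := by rw [hXdef, conjTranspose_mul, hKH.eq]
  refine ⟨(c:ℂ)⁻¹ • (Xᴴ * T * X), T * X, ⟨?_, ?_, ?_⟩, ?_⟩
  · rw [IsHermitian, conjTranspose_smul, (isHermitian_conjTranspose_mul_mul X hTH).eq,
      star_inv₀, Complex.star_def, Complex.conj_ofReal]
  · have hY0H : (T * X)ᴴ = Xᴴ * T := by rw [conjTranspose_mul, hTH.eq]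
    rw [toep_smul, hY0H, ← hTdef]
    exact psd_block_B hT X hc
  · rw [toep_smul, ← hTdef]
    exact psd_real_smul hT hc.le
  · -- objective inequality
    have hYsub : Y - T * X = (lam:ℂ) • X := by
      calc Y - T * X = Dm * X - T * X := by
            rw [hXdef, ← Matrix.mul_assoc Dm K Y, hK1, Matrix.one_mul]
      _ = (lam:ℂ) • X := by
            rw [hDmdef, Matrix.add_mul, Matrix.smul_mul, Matrix.one_mul, add_sub_cancel_left]
    have hmat : (lam:ℂ) • (Xᴴ * X) + Xᴴ * T * X = Yᴴ * K * Y := by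
      calc (lam:ℂ) • (Xᴴ * X) + Xᴴ * T * X = Xᴴ * Dm * X := by
            rw [hDmdef, Matrix.mul_add, Matrix.add_mul, Matrix.mul_smul, Matrix.smul_mul,
              Matrix.mul_one]
            abel
      _ = Yᴴ * K * Y := by
            rw [hXH, hXdef, Matrix.mul_assoc, Matrix.mul_assoc, ← Matrix.mul_assoc Dm, hK1,
              Matrix.one_mul, ← Matrix.mul_assoc]
    have htr : (Yᴴ * K * Y).trace.re
        = lam * (Xᴴ * X).trace.re + (Xᴴ * T * X).trace.re := by
      rw [← hmat, trace_add, trace_smul, Complex.add_re, smul_eq_mul, Complex.re_ofReal_mul]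
    have hW : (Yᴴ * K * Y).trace.re ≤ U.trace.re := by
      have h0 := psd_trace_re_nonneg hSchur
      rw [trace_sub, Complex.sub_re] at h0
      linarith
    have e1 : anmObj Y lam ((c:ℂ) • u) ((c:ℂ)⁻¹ • (Xᴴ * T * X)) (T * X)
        = (lam/2) * (Yᴴ * K * Y).trace.re + (lam*(N:ℝ)/(2*M)) * T.trace.re := by
      rw [anmObj, hYsub, frobSq_real_smul, frobSq_eq_trace, toep_smul, ← hTdef,
        trace_smul, trace_smul, smul_eq_mul, smul_eq_mul, ← Complex.ofReal_inv,
        Complex.re_ofReal_mul, Complex.re_ofReal_mul, htr, ← hcdef, hN2]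
      field_simp
      ring
    have e2 : glSparrowObj lam u U
        = (lam/2) * U.trace.re + (lam*(N:ℝ)/(2*M)) * T.trace.re := by
      rw [glSparrowObj, ← hTdef]
      have hNne : (N:ℝ) ≠ 0 := by positivity
      have hMne : (M:ℝ) ≠ 0 := by
        have : (0:ℝ) < M := by exact_mod_cast hM
        exact this.ne'
      field_simp
    rw [e1, e2]
    have : (lam/2) * (Yᴴ * K * Y).trace.re ≤ (lam/2) * U.trace.re :=
      mul_le_mul_of_nonneg_left hW (by positivity)
    linarith
lemma sparrow_obj_nonneg {M N : ℕ} {Y : Matrix (Fin M) (Fin N) ℂ} {lam : ℝ} (hlam : 0 < lam)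
    {u : Fin M → ℂ} {U : Matrix (Fin N) (Fin N) ℂ} (h : glSparrowFeas Y lam u U) :
    0 ≤ glSparrowObj lam u U := by
  have hU : U.PosSemidef := by
    have hs := h.2.1.submatrix (Sum.inl : Fin N → Fin N ⊕ Fin M)
    have he : ((fromBlocks U Yᴴ Y (Toep u + (lam:ℂ) • 1)).submatrix Sum.inl Sum.inl) = U := by
      ext i j; rfl
    rwa [he] at hs
  have h1 := psd_trace_re_nonneg hU
  have h2 := psd_trace_re_nonneg h.2.2
  rw [glSparrowObj]
  positivity

lemma anm_obj_nonneg {M N : ℕ} {Y : Matrix (Fin M) (Fin N) ℂ} {lam : ℝ} (hlam : 0 < lam)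
    {v : Fin M → ℂ} {V : Matrix (Fin N) (Fin N) ℂ} {Y0 : Matrix (Fin M) (Fin N) ℂ}
    (h : anmFeas v V Y0) : 0 ≤ anmObj Y lam v V Y0 := by
  have hV : V.PosSemidef := by
    have hs := h.2.1.submatrix (Sum.inl : Fin N → Fin N ⊕ Fin M)
    have he : ((fromBlocks V Y0ᴴ Y0 (Toep v)).submatrix Sum.inl Sum.inl) = V := by
      ext i j; rfl
    rwa [he] at hs
  have h1 := psd_trace_re_nonneg hV
  have h2 := psd_trace_re_nonneg h.2.2
  have h3 := frobSq_nonneg (Y - Y0)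
  have h4 : 0 ≤ Real.sqrt N := Real.sqrt_nonneg _
  rw [anmObj]
  positivity

lemma sparrow_nonempty {M N : ℕ} (Y : Matrix (Fin M) (Fin N) ℂ) {lam : ℝ} (hlam : 0 < lam) :
    glSparrowFeas Y lam (0 : Fin M → ℂ) ((lam:ℂ)⁻¹ • (Yᴴ * Y)) := by
  refine ⟨?_, ?_, ?_⟩
  · rw [IsHermitian, conjTranspose_smul, (posSemidef_conjTranspose_mul_self Y).1.eq,
      star_inv₀, Complex.star_def, Complex.conj_ofReal]
  · rw [toep_zero, zero_add]
    exact psd_block2 Y hlam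
  · rw [toep_zero]; exact PosSemidef.zero

lemma anm_nonempty {M N : ℕ} : anmFeas (0 : Fin M → ℂ) (0 : Matrix (Fin N) (Fin N) ℂ)
    (0 : Matrix (Fin M) (Fin N) ℂ) := by
  refine ⟨isHermitian_zero, ?_, ?_⟩
  · rw [toep_zero, conjTranspose_zero]
    exact posSemidef_fromBlocks_diag PosSemidef.zero PosSemidef.zero
  · rw [toep_zero]; exact PosSemidef.zero


/-- The gridless SPARROW SDP (with objective scaled by λN/2) and the MMV
atomic-norm SDP have the same optimal value, and optimal solutions are related by
u* = v*/√N. -/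
theorem gl_sparrow_anm_equivalence (M N : ℕ) (hM : 0 < M) (hN : 0 < N)
    (Y : Matrix (Fin M) (Fin N) ℂ) (lam : ℝ) (hlam : 0 < lam) :
    sInf {r : ℝ | ∃ (u : Fin M → ℂ) (U : Matrix (Fin N) (Fin N) ℂ),
        glSparrowFeas Y lam u U ∧ r = glSparrowObj lam u U} =
      sInf {r : ℝ | ∃ (v : Fin M → ℂ) (V : Matrix (Fin N) (Fin N) ℂ)
          (Y0 : Matrix (Fin M) (Fin N) ℂ),
        anmFeas v V Y0 ∧ r = anmObj Y lam v V Y0} ∧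
    (∀ (v : Fin M → ℂ) (V : Matrix (Fin N) (Fin N) ℂ) (Y0 : Matrix (Fin M) (Fin N) ℂ),
      anmFeas v V Y0 →
      anmObj Y lam v V Y0 =
        sInf {r : ℝ | ∃ (v' : Fin M → ℂ) (V' : Matrix (Fin N) (Fin N) ℂ)
            (Y0' : Matrix (Fin M) (Fin N) ℂ),
          anmFeas v' V' Y0' ∧ r = anmObj Y lam v' V' Y0'} →
      ∃ U : Matrix (Fin N) (Fin N) ℂ,
        glSparrowFeas Y lam (((Real.sqrt N : ℂ))⁻¹ • v) U ∧
        glSparrowObj lam (((Real.sqrt N : ℂ))⁻¹ • v) U =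
          sInf {r : ℝ | ∃ (u : Fin M → ℂ) (U' : Matrix (Fin N) (Fin N) ℂ),
            glSparrowFeas Y lam u U' ∧ r = glSparrowObj lam u U'}) ∧
    (∀ (u : Fin M → ℂ) (U : Matrix (Fin N) (Fin N) ℂ),
      glSparrowFeas Y lam u U →
      glSparrowObj lam u U =
        sInf {r : ℝ | ∃ (u' : Fin M → ℂ) (U' : Matrix (Fin N) (Fin N) ℂ),
          glSparrowFeas Y lam u' U' ∧ r = glSparrowObj lam u' U'} →
      ∃ (V : Matrix (Fin N) (Fin N) ℂ) (Y0 : Matrix (Fin M) (Fin N) ℂ),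
        anmFeas ((Real.sqrt N : ℂ) • u) V Y0 ∧
        anmObj Y lam ((Real.sqrt N : ℂ) • u) V Y0 =
          sInf {r : ℝ | ∃ (v' : Fin M → ℂ) (V' : Matrix (Fin N) (Fin N) ℂ)
              (Y0' : Matrix (Fin M) (Fin N) ℂ),
            anmFeas v' V' Y0' ∧ r = anmObj Y lam v' V' Y0'}) := by
  set SS : Set ℝ := {r : ℝ | ∃ (u : Fin M → ℂ) (U : Matrix (Fin N) (Fin N) ℂ),
        glSparrowFeas Y lam u U ∧ r = glSparrowObj lam u U} with hSS
  set AA : Set ℝ := {r : ℝ | ∃ (v : Fin M → ℂ) (V : Matrix (Fin N) (Fin N) ℂ)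
          (Y0 : Matrix (Fin M) (Fin N) ℂ),
        anmFeas v V Y0 ∧ r = anmObj Y lam v V Y0} with hAA
  have hSne : SS.Nonempty :=
    ⟨_, 0, (lam:ℂ)⁻¹ • (Yᴴ * Y), sparrow_nonempty Y hlam, rfl⟩
  have hAne : AA.Nonempty := ⟨_, 0, 0, 0, anm_nonempty, rfl⟩
  have hSbdd : BddBelow SS := by
    refine ⟨0, fun r hr => ?_⟩
    obtain ⟨u, U, hf, rfl⟩ := hr
    exact sparrow_obj_nonneg hlam hf
  have hAbdd : BddBelow AA := by
    refine ⟨0, fun r hr => ?_⟩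
    obtain ⟨v, V, Y0, hf, rfl⟩ := hr
    exact anm_obj_nonneg hlam hf
  have h1 : sInf SS ≤ sInf AA := by
    refine le_csInf hAne ?_
    rintro r ⟨v, V, Y0, hf, rfl⟩
    obtain ⟨hfs, heq⟩ := lemA hM hN Y hlam hf
    exact csInf_le_of_le hSbdd ⟨_, _, hfs, rfl⟩ heq.le
  have h2 : sInf AA ≤ sInf SS := by
    refine le_csInf hSne ?_
    rintro r ⟨u, U, hf, rfl⟩
    obtain ⟨V, Y0, hfa, hle⟩ := lemB hM hN Y hlam hf
    exact csInf_le_of_le hAbdd ⟨_, _, _, hfa, rfl⟩ hle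
  have heq : sInf SS = sInf AA := h1.antisymm h2
  refine ⟨heq, ?_, ?_⟩
  · intro v V Y0 hf hopt
    obtain ⟨hfs, hobj⟩ := lemA hM hN Y hlam hf
    exact ⟨_, hfs, by rw [hobj, hopt, ← heq]⟩
  · intro u U hf hopt
    obtain ⟨V, Y0, hfa, hle⟩ := lemB hM hN Y hlam hf
    refine ⟨V, Y0, hfa, ?_⟩
    have lo : sInf AA ≤ anmObj Y lam ((Real.sqrt N : ℂ) • u) V Y0 :=
      csInf_le hAbdd ⟨_, _, _, hfa, rfl⟩
    have hi : anmObj Y lam ((Real.sqrt N : ℂ) • u) V Y0 ≤ sInf AA := by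
      rw [← heq, ← hopt]; exact hle
    exact hi.antisymm lo
end
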